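/- For SU(2), with φ_{m,l} the (l)-spherical matrix coefficient polynomial, the recurrence ⟨g e₁, e₂⟩ (E⁻ φ_{m,l})(g) = (1/4) · ((m−l)(m+l+2)/(m+1)) · (φ_{m+1,l+1}(g) − φ_{m-1,l+1}(g)) holds for all g ∈ SL(2,ℂ). -/

import Mathlib

/- See the appendix on SL(2): Sᵐ(ℂ²) is the m-th symmetric power of the standard
representation of SL(2,ℂ).  In the orthogonal monomial basis, normalized so that
`binom(m,k)‖e₁^k ⊙ e₂^{m-k}‖² = 1`, the spherical matrix coefficient
`φ_{m,l}(g) = binom(m,k)·⟨g(e₁^k ⊙ e₂^{m-k}), e₁^k ⊙ e₂^{m-k}⟩`, `l = m − 2k`,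
is the explicit polynomial in the entries of `g` below. -/
noncomputable def phi (m k : ℕ) (g : Matrix (Fin 2) (Fin 2) ℂ) : ℂ :=
  ∑ i ∈ Finset.range (k + 1),
    (Nat.choose k i : ℂ) * (Nat.choose (m - k) (k - i) : ℂ) *
      g 0 0 ^ i * g 1 0 ^ (k - i) * g 0 1 ^ (k - i) * g 1 1 ^ ((m - k) - (k - i))

/-- Right differentiation by `E⁻ = E₂₁` of a function on SL(2,ℂ):
`(E⁻ f)(g) = d/ds f(g·exp(sE⁻))|₀`, where `exp(sE⁻) = 1 + sE⁻`. -/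
noncomputable def rightDerivEminus (f : Matrix (Fin 2) (Fin 2) ℂ → ℂ)
    (g : Matrix (Fin 2) (Fin 2) ℂ) : ℂ :=
  deriv (fun s : ℂ => f (g * (1 + s • (!![0, 0; 1, 0] : Matrix (Fin 2) (Fin 2) ℂ)))) 0




lemma nat_id_zero (K M : ℕ) :
    (K+M+2) * M.choose (K+1) + (K+1) * M.choose K = (M+1) * (M+1).choose (K+1) := by
  rcases le_or_gt K M with h | h
  · have hp : (M+1).choose (K+1) = M.choose K + M.choose (K+1) := Nat.choose_succ_succ M K
    have hr : M.choose (K+1) * (K+1) = M.choose K * (M - K) := Nat.choose_succ_right_eq M K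
    zify [h] at hr ⊢
    rw [hp]
    push_cast
    linear_combination hr
  · rw [Nat.choose_eq_zero_of_lt h, Nat.choose_eq_zero_of_lt (by omega),
      Nat.choose_eq_zero_of_lt (by omega)]
    ring

lemma nat_id_succ (K M j : ℕ) :
    (K+M+2) * ((K+1).choose (j+1) * M.choose (K-j))
      + (K+1) * (K.choose (j+1) * M.choose (K-(j+1)))
    = (M+1) * ((K+1).choose (j+1) * (M+1).choose (K-j))
      + (K+1) * (K.choose j * M.choose (K-j)) := by
  rcases lt_or_ge j K with h | h
  · obtain ⟨t, rfl⟩ : ∃ t, K = j + 1 + t := ⟨K - (j+1), by omega⟩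
    have e1 : j + 1 + t - j = t + 1 := by omega
    have e2 : j + 1 + t - (j+1) = t := by omega
    rw [e1, e2]
    have hP1 : (j+1+t+1).choose (j+1) = (j+1+t).choose j + (j+1+t).choose (j+1) :=
      Nat.choose_succ_succ (j+1+t) j
    have hP2 : (M+1).choose (t+1) = M.choose t + M.choose (t+1) := Nat.choose_succ_succ M t
    have hR2 : (j+1+t+1) * (j+1+t).choose (j+1) = (j+1+t+1).choose (j+1) * (t+1) := by
      have h1 : (j+1+t+1) * (j+1+t).choose (j+1) = (j+1+t+1).choose (j+2) * (j+2) :=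
        Nat.add_one_mul_choose_eq (j+1+t) (j+1)
      have h2 : (j+1+t+1).choose (j+2) * (j+2) = (j+1+t+1).choose (j+1) * ((j+1+t+1) - (j+1)) :=
        Nat.choose_succ_right_eq (j+1+t+1) (j+1)
      have e3 : j+1+t+1 - (j+1) = t + 1 := by omega
      rw [e3] at h2
      rw [h1, h2]
    have hR3 : (M+1) * M.choose t = (M+1).choose (t+1) * (t+1) :=
      Nat.add_one_mul_choose_eq M t
    rw [hP2] at hR3
    zify at hP1 hR2 hR3 ⊢
    rw [hP2]
    push_cast
    linear_combination ((j:ℤ)+t+2) * (M.choose (t+1) : ℤ) * hP1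
      + ((M.choose (t+1) : ℤ) + (M.choose t : ℤ)) * hR2
      - (((j+1+t+1).choose (j+1) : ℤ)) * hR3
  · rcases eq_or_lt_of_le h with rfl | h'
    · simp [Nat.choose_self, Nat.sub_self, Nat.choose_succ_self]
      omega
    · rw [Nat.choose_eq_zero_of_lt (show K+1 < j+1 by omega),
        Nat.choose_eq_zero_of_lt (show K < j+1 by omega),
        Nat.choose_eq_zero_of_lt (show K < j by omega)]
      ring

lemma deriv_phi (m k : ℕ) (g : Matrix (Fin 2) (Fin 2) ℂ) :
    rightDerivEminus (phi m k) g =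
      ∑ i ∈ Finset.range (k+1), (Nat.choose k i : ℂ) * (Nat.choose (m-k) (k-i) : ℂ) *
        (((i : ℂ) * g 0 0 ^ (i-1) * g 0 1 * g 1 0 ^ (k-i)
          + g 0 0 ^ i * (((k-i : ℕ) : ℂ) * g 1 0 ^ (k-i-1) * g 1 1))
          * g 0 1 ^ (k-i) * g 1 1 ^ ((m-k)-(k-i))) := by
  have hmat : ∀ s : ℂ, g * (1 + s • (!![0, 0; 1, 0] : Matrix (Fin 2) (Fin 2) ℂ)) =
      !![g 0 0 + s * g 0 1, g 0 1; g 1 0 + s * g 1 1, g 1 1] := by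
    intro s
    ext i j
    fin_cases i <;> fin_cases j <;>
      simp [Matrix.mul_apply, Fin.sum_univ_two, Matrix.one_apply] <;> ring
  unfold rightDerivEminus
  have hfun : (fun s : ℂ => phi m k (g * (1 + s • (!![0, 0; 1, 0] : Matrix (Fin 2) (Fin 2) ℂ))))
      = fun s : ℂ => ∑ i ∈ Finset.range (k+1),
        (Nat.choose k i : ℂ) * (Nat.choose (m-k) (k-i) : ℂ) *
          ((g 0 0 + s * g 0 1) ^ i * ((g 1 0 + s * g 1 1) ^ (k-i)
            * (g 0 1 ^ (k-i) * g 1 1 ^ ((m-k)-(k-i))))) := by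
    funext s
    rw [hmat]
    unfold phi
    apply Finset.sum_congr rfl
    intro i _
    simp
    ring
  rw [hfun]
  have hder : HasDerivAt (fun s : ℂ => ∑ i ∈ Finset.range (k+1),
      (Nat.choose k i : ℂ) * (Nat.choose (m-k) (k-i) : ℂ) *
        ((g 0 0 + s * g 0 1) ^ i * ((g 1 0 + s * g 1 1) ^ (k-i)
          * (g 0 1 ^ (k-i) * g 1 1 ^ ((m-k)-(k-i))))))
      (∑ i ∈ Finset.range (k+1),
        (Nat.choose k i : ℂ) * (Nat.choose (m-k) (k-i) : ℂ) *
          (((i : ℂ) * (g 0 0 + 0 * g 0 1) ^ (i-1) * g 0 1) * ((g 1 0 + 0 * g 1 1) ^ (k-i)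
              * (g 0 1 ^ (k-i) * g 1 1 ^ ((m-k)-(k-i))))
            + (g 0 0 + 0 * g 0 1) ^ i * ((((k-i : ℕ) : ℂ) * (g 1 0 + 0 * g 1 1) ^ (k-i-1) * g 1 1)
              * (g 0 1 ^ (k-i) * g 1 1 ^ ((m-k)-(k-i)))))) 0 := by
    apply HasDerivAt.fun_sum
    intro i _
    have h1 : HasDerivAt (fun s : ℂ => g 0 0 + s * g 0 1) (g 0 1) 0 := by
      simpa using (((hasDerivAt_id (0:ℂ)).mul_const (g 0 1)).const_add (g 0 0))
    have h2 : HasDerivAt (fun s : ℂ => g 1 0 + s * g 1 1) (g 1 1) 0 := by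
      simpa using (((hasDerivAt_id (0:ℂ)).mul_const (g 1 1)).const_add (g 1 0))
    have hp1 := h1.fun_pow i
    have hp2 := (h2.fun_pow (k-i)).mul_const (g 0 1 ^ (k-i) * g 1 1 ^ ((m-k)-(k-i)))
    have := (hp1.fun_mul hp2).const_mul ((Nat.choose k i : ℂ) * (Nat.choose (m-k) (k-i) : ℂ))
    convert this using 1
  rw [hder.deriv]
  apply Finset.sum_congr rfl
  intro i _
  simp only [zero_mul, add_zero, mul_zero]
  ring

lemma sumE1 (A B Cc Dd : ℂ) (hdet : A * Dd - B * Cc = 1) (K M : ℕ) :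
    Cc * ∑ i ∈ Finset.range (K+1+1), (Nat.choose (K+1) i : ℂ) * (Nat.choose M (K+1-i) : ℂ) *
      (((i : ℂ) * A ^ (i-1) * B * Cc ^ (K+1-i)
        + A ^ i * (((K+1-i : ℕ) : ℂ) * Cc ^ (K+1-i-1) * Dd)) * B ^ (K+1-i) * Dd ^ (M-(K+1-i)))
    = ((K:ℂ)+1) * ∑ i ∈ Finset.range (K+1+1),
        (Nat.choose (K+1) i : ℂ) * (Nat.choose M (K+1-i) : ℂ) *
          (A ^ i * (B * Cc) ^ (K+1-i) * Dd ^ (M+1-(K+1-i)))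
      - ((K:ℂ)+1) * ∑ i ∈ Finset.range (K+1),
          (Nat.choose K i : ℂ) * (Nat.choose M (K-i) : ℂ) *
            (A ^ i * (B * Cc) ^ (K-i) * Dd ^ (M-(K-i))) := by
  rw [Finset.mul_sum]
  have hmain : ∀ i ∈ Finset.range (K+1+1),
      Cc * ((Nat.choose (K+1) i : ℂ) * (Nat.choose M (K+1-i) : ℂ) *
        (((i : ℂ) * A ^ (i-1) * B * Cc ^ (K+1-i)
          + A ^ i * (((K+1-i : ℕ) : ℂ) * Cc ^ (K+1-i-1) * Dd)) * B ^ (K+1-i) * Dd ^ (M-(K+1-i))))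
      = ((K:ℂ)+1) * ((Nat.choose (K+1) i : ℂ) * (Nat.choose M (K+1-i) : ℂ) *
          (A ^ i * (B * Cc) ^ (K+1-i) * Dd ^ (M+1-(K+1-i))))
        - (Nat.choose (K+1) i : ℂ) * (Nat.choose M (K+1-i) : ℂ) *
            ((i : ℂ) * (A ^ (i-1) * (B * Cc) ^ (K+1-i) * Dd ^ (M-(K+1-i)))) := by
    intro i hi
    have hik : i ≤ K + 1 := by simpa using Nat.lt_succ_iff.mp (Finset.mem_range.mp hi)
    by_cases hM : K+1-i ≤ M
    · have he : M+1-(K+1-i) = M-(K+1-i)+1 := by omega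
      rw [he]
      rcases Nat.eq_zero_or_pos i with rfl | hi0
      · simp only [Nat.sub_zero, Nat.cast_zero, zero_mul, zero_add, pow_zero, one_mul,
          Nat.add_sub_cancel]
        push_cast
        ring
      · obtain ⟨i', rfl⟩ : ∃ i', i = i'+1 := ⟨i-1, by omega⟩
        rcases eq_or_lt_of_le hik with hieq | hilt
        · rw [hieq]
          simp only [Nat.sub_self, Nat.cast_zero, pow_zero, zero_mul, mul_zero, mul_one,
            Nat.sub_zero, zero_add, add_zero, one_mul]
          push_cast
          linear_combination (-((Nat.choose (K+1) (K+1) : ℂ) * (Nat.choose M 0 : ℂ)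
            * ((K:ℂ)+1) * A^K * Dd^M)) * hdet
        · obtain ⟨j', hj'⟩ : ∃ j', K+1-(i'+1) = j'+1 := ⟨K-i'-1, by omega⟩
          rw [hj']
          simp only [Nat.add_sub_cancel]
          have hKc : (K:ℂ)+1 = ((i':ℂ)+1) + ((j':ℂ)+1) := by
            have : K+1 = (i'+1) + (j'+1) := by omega
            exact_mod_cast congrArg (Nat.cast : ℕ → ℂ) this
          rw [hKc]
          push_cast
          linear_combination (-((Nat.choose (K+1) (i'+1) : ℂ) * (Nat.choose M (j'+1) : ℂ)
            * ((i':ℂ)+1) * A^i' * (B*Cc)^(j'+1) * Dd^(M-(j'+1)))) * hdet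
    · rw [Nat.choose_eq_zero_of_lt (show M < K+1-i by omega)]
      simp
  rw [Finset.sum_congr rfl hmain, Finset.sum_sub_distrib]
  congr 1
  · rw [Finset.mul_sum]
  · rw [Finset.sum_range_succ']
    simp only [Nat.cast_zero, zero_mul, mul_zero, add_zero]
    rw [Finset.mul_sum]
    apply Finset.sum_congr rfl
    intro i hi
    have hc : (K+1) * Nat.choose K i = (Nat.choose (K+1) (i+1)) * (i+1) :=
      Nat.add_one_mul_choose_eq K i
    have hc' : ((K:ℂ)+1) * (Nat.choose K i : ℂ) = (Nat.choose (K+1) (i+1) : ℂ) * ((i:ℂ)+1) := by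
      exact_mod_cast congrArg (Nat.cast : ℕ → ℂ) hc
    have e1 : K+1-(i+1) = K-i := by omega
    rw [e1]
    simp only [Nat.add_sub_cancel]
    push_cast
    linear_combination (-(A^i * (B*Cc)^(K-i) * Dd^(M-(K-i)) * (Nat.choose M (K-i):ℂ))) * hc'

lemma sumE2 (A B Cc Dd : ℂ) (hdet : A * Dd - B * Cc = 1) (K M : ℕ) :
    ((K:ℂ)+(M:ℂ)+2) * ∑ i ∈ Finset.range (K+1+1),
        (Nat.choose (K+1) i : ℂ) * (Nat.choose M (K+1-i) : ℂ) *
          (A ^ i * (B * Cc) ^ (K+1-i) * Dd ^ (M+1-(K+1-i)))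
    = ((M:ℂ)+1) * ∑ i ∈ Finset.range (K+1+1),
        (Nat.choose (K+1) i : ℂ) * (Nat.choose (M+1) (K+1-i) : ℂ) *
          (A ^ i * (B * Cc) ^ (K+1-i) * Dd ^ (M+1-(K+1-i)))
      + ((K:ℂ)+1) * ∑ i ∈ Finset.range (K+1),
          (Nat.choose K i : ℂ) * (Nat.choose M (K-i) : ℂ) *
            (A ^ i * (B * Cc) ^ (K-i) * Dd ^ (M-(K-i))) := by
  -- abbreviate W-terms
  set W : ℕ → ℂ := fun i => A ^ i * (B * Cc) ^ (K+1-i) * Dd ^ (M+1-(K+1-i)) with hWdef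
  -- the Y-sum in terms of W
  have hYW : ∀ i ∈ Finset.range (K+1),
      (Nat.choose K i : ℂ) * (Nat.choose M (K-i) : ℂ) *
          (A ^ i * (B * Cc) ^ (K-i) * Dd ^ (M-(K-i)))
        = (Nat.choose K i : ℂ) * (Nat.choose M (K-i) : ℂ) * W (i+1)
          - (Nat.choose K i : ℂ) * (Nat.choose M (K-i) : ℂ) * W i := by
    intro i hi
    have hiK : i ≤ K := Nat.lt_succ_iff.mp (Finset.mem_range.mp hi)
    by_cases hM : K-i ≤ M
    · have e1 : K+1-(i+1) = K-i := by omega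
      have e2 : M+1-(K-i) = M-(K-i)+1 := by omega
      have e3 : K+1-i = (K-i)+1 := by omega
      have e4 : M+1-((K-i)+1) = M-(K-i) := by omega
      simp only [hWdef, e1, e2, e3, e4]
      linear_combination (-((Nat.choose K i : ℂ) * (Nat.choose M (K-i) : ℂ)
        * A^i * (B*Cc)^(K-i) * Dd^(M-(K-i)))) * hdet
    · rw [Nat.choose_eq_zero_of_lt (show M < K-i by omega)]
      simp
  rw [Finset.sum_congr rfl hYW, Finset.sum_sub_distrib]
  -- extend the subtracted sum to range (K+1+1)
  have hext : ∑ i ∈ Finset.range (K+1+1),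
      (Nat.choose K i : ℂ) * (Nat.choose M (K-i) : ℂ) * W i
      = ∑ i ∈ Finset.range (K+1),
          (Nat.choose K i : ℂ) * (Nat.choose M (K-i) : ℂ) * W i := by
    rw [Finset.sum_range_succ]
    simp [Nat.choose_succ_self]
  -- main split identity
  have hsplit : ∑ i ∈ Finset.range (K+1+1),
      (((K:ℂ)+(M:ℂ)+2) * ((Nat.choose (K+1) i : ℂ) * (Nat.choose M (K+1-i) : ℂ) * W i)
        + ((K:ℂ)+1) * ((Nat.choose K i : ℂ) * (Nat.choose M (K-i) : ℂ) * W i)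
        - ((M:ℂ)+1) * ((Nat.choose (K+1) i : ℂ) * (Nat.choose (M+1) (K+1-i) : ℂ) * W i))
      = ∑ i ∈ Finset.range (K+1),
          ((K:ℂ)+1) * ((Nat.choose K i : ℂ) * (Nat.choose M (K-i) : ℂ) * W (i+1)) := by
    rw [Finset.sum_range_succ']
    have h0 : ((K:ℂ)+(M:ℂ)+2) * ((Nat.choose (K+1) 0 : ℂ) * (Nat.choose M (K+1-0) : ℂ) * W 0)
        + ((K:ℂ)+1) * ((Nat.choose K 0 : ℂ) * (Nat.choose M (K-0) : ℂ) * W 0)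
        - ((M:ℂ)+1) * ((Nat.choose (K+1) 0 : ℂ) * (Nat.choose (M+1) (K+1-0) : ℂ) * W 0) = 0 := by
      have hz := nat_id_zero K M
      have hzC : ((K:ℂ)+(M:ℂ)+2) * (Nat.choose M (K+1) : ℂ) + ((K:ℂ)+1) * (Nat.choose M K : ℂ)
          = ((M:ℂ)+1) * (Nat.choose (M+1) (K+1) : ℂ) := by exact_mod_cast hz
      simp only [Nat.choose_zero_right, Nat.cast_one, one_mul, Nat.sub_zero]
      linear_combination W 0 * hzC
    rw [h0, add_zero]
    apply Finset.sum_congr rfl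
    intro i hi
    have hn := nat_id_succ K M i
    have e1 : K+1-(i+1) = K-i := by omega
    have hnC : ((K:ℂ)+(M:ℂ)+2) * ((Nat.choose (K+1) (i+1) : ℂ) * (Nat.choose M (K-i) : ℂ))
        + ((K:ℂ)+1) * ((Nat.choose K (i+1) : ℂ) * (Nat.choose M (K-(i+1)) : ℂ))
        = ((M:ℂ)+1) * ((Nat.choose (K+1) (i+1) : ℂ) * (Nat.choose (M+1) (K-i) : ℂ))
          + ((K:ℂ)+1) * ((Nat.choose K i : ℂ) * (Nat.choose M (K-i) : ℂ)) := by
      exact_mod_cast hn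
    rw [e1]
    linear_combination W (i+1) * hnC
  have hdistrib : ∑ i ∈ Finset.range (K+1+1),
      (((K:ℂ)+(M:ℂ)+2) * ((Nat.choose (K+1) i : ℂ) * (Nat.choose M (K+1-i) : ℂ) * W i)
        + ((K:ℂ)+1) * ((Nat.choose K i : ℂ) * (Nat.choose M (K-i) : ℂ) * W i)
        - ((M:ℂ)+1) * ((Nat.choose (K+1) i : ℂ) * (Nat.choose (M+1) (K+1-i) : ℂ) * W i))
      = ((K:ℂ)+(M:ℂ)+2) * ∑ i ∈ Finset.range (K+1+1),
            (Nat.choose (K+1) i : ℂ) * (Nat.choose M (K+1-i) : ℂ) * W i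
        + ((K:ℂ)+1) * ∑ i ∈ Finset.range (K+1+1),
            (Nat.choose K i : ℂ) * (Nat.choose M (K-i) : ℂ) * W i
        - ((M:ℂ)+1) * ∑ i ∈ Finset.range (K+1+1),
            (Nat.choose (K+1) i : ℂ) * (Nat.choose (M+1) (K+1-i) : ℂ) * W i := by
    rw [Finset.sum_sub_distrib, Finset.sum_add_distrib, ← Finset.mul_sum, ← Finset.mul_sum,
      ← Finset.mul_sum]
  rw [hdistrib] at hsplit
  rw [← Finset.mul_sum] at hsplit
  linear_combination hsplit - ((K:ℂ)+1) * hext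


/-- Recurrence formula: `⟨g e₁, e₂⟩ (E⁻ φ_{m,l})(g)
  = (1/4)·((m−l)(m+l+2)/(m+1))·(φ_{m+1,l+1}(g) − φ_{m−1,l+1}(g))` for all g ∈ SL(2,ℂ).
Here `⟨g e₁, e₂⟩ = g₁₀`, `l = m − 2k`, and `φ_{m+1,l+1}`, `φ_{m−1,l+1}` correspond to
the parameters `(m+1, k)` and `(m−1, k−1)` respectively. -/
theorem spherical_recurrence_Eminus (m k : ℕ) (hk : k ≤ m) (l : ℤ)
    (hl : l = (m : ℤ) - 2 * k)
    (g : Matrix (Fin 2) (Fin 2) ℂ) (hg : g.det = 1) :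
    g 1 0 * rightDerivEminus (phi m k) g =
      (1 / 4) * ((((m : ℂ) - (l : ℂ)) * ((m : ℂ) + (l : ℂ) + 2)) / ((m : ℂ) + 1)) *
        (phi (m + 1) k g - phi (m - 1) (k - 1) g) := by
  rw [Matrix.det_fin_two] at hg
  have hD := deriv_phi m k g
  obtain _ | K := k
  · -- k = 0
    have hzero : rightDerivEminus (phi m 0) g = 0 := by
      rw [hD]
      norm_num
    rw [hzero, mul_zero]
    have hlc : (l:ℂ) = (m:ℂ) := by rw [hl]; push_cast; ring
    rw [hlc]
    ring
  · -- k = K+1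
    obtain ⟨M, rfl⟩ : ∃ M, m = K + 1 + M := ⟨m - (K+1), by omega⟩
    have hMs : K + 1 + M - (K + 1) = M := by omega
    simp only [hMs] at hD
    have hA : phi (K + 1 + M + 1) (K + 1) g
        = ∑ i ∈ Finset.range (K+1+1),
            (Nat.choose (K+1) i : ℂ) * (Nat.choose (M+1) (K+1-i) : ℂ) *
              (g 0 0 ^ i * (g 0 1 * g 1 0) ^ (K+1-i) * g 1 1 ^ (M+1-(K+1-i))) := by
      unfold phi
      simp only [show K + 1 + M + 1 - (K + 1) = M + 1 from by omega]
      exact Finset.sum_congr rfl (fun i _ => by ring)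
    have hB : phi (K + 1 + M - 1) (K + 1 - 1) g
        = ∑ i ∈ Finset.range (K+1),
            (Nat.choose K i : ℂ) * (Nat.choose M (K-i) : ℂ) *
              (g 0 0 ^ i * (g 0 1 * g 1 0) ^ (K-i) * g 1 1 ^ (M-(K-i))) := by
      simp only [show K + 1 + M - 1 = K + M from by omega, Nat.add_sub_cancel]
      unfold phi
      simp only [show K + M - K = M from by omega]
      exact Finset.sum_congr rfl (fun i _ => by ring)
    have hne : (K:ℂ) + (M:ℂ) + 2 ≠ 0 := by
      have h' : ((K + M + 2 : ℕ) : ℂ) ≠ 0 := Nat.cast_ne_zero.mpr (by omega)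
      push_cast at h'
      exact h'
    have hco : (1 / 4 : ℂ) * ((((K+1+M : ℕ) : ℂ) - (l : ℂ)) * (((K+1+M : ℕ) : ℂ) + (l : ℂ) + 2)
          / (((K+1+M : ℕ) : ℂ) + 1))
        = (((K:ℂ)+1) * ((M:ℂ)+1)) / ((K:ℂ)+(M:ℂ)+2) := by
      have hlc : (l:ℂ) = (M:ℂ) - (K:ℂ) - 1 := by rw [hl]; push_cast; ring
      rw [hlc]
      push_cast
      rw [eq_div_iff hne]
      have hne2 : (K:ℂ) + 1 + (M:ℂ) + 1 ≠ 0 := fun h => hne (by linear_combination h)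
      field_simp [hne2]
      ring
    rw [hD, hA, hB, hco, div_mul_eq_mul_div, eq_div_iff hne]
    have hE1 := sumE1 (g 0 0) (g 0 1) (g 1 0) (g 1 1) hg K M
    have hE2 := sumE2 (g 0 0) (g 0 1) (g 1 0) (g 1 1) hg K M
    linear_combination ((K:ℂ) + (M:ℂ) + 2) * hE1 + ((K:ℂ) + 1) * hE2
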